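/- arXiv:1909.02348 — 2 statements merged into one kernel-verified Lean document; each statement's English description precedes it below -/
import Mathlib

section
/- Let n be a positive natural number, 0 < μ ≤ ε, ξ > 0, and 0 ≤ t ≤ T. Let φ : ℝ → ℝ be continuous and nonnegative with φ(x) ≤ a₀ + a₁x for all x ∈ ℝ, and let A₀ : ℝⁿ → ℝ be measurable and essentially bounded. For a measurable v : ℝⁿ → ℝ define P(v)(x) = A₀(x) · exp( t · (∫_{ℝⁿ} φ(v(y)) Γ_μ(x,y) dy) / (∫_{ℝⁿ} φ(v(y)) Γ_ε(x,y) dy + ξ) ). Then P(v) is essentially bounded with ‖P(v)‖_{L^∞(ℝⁿ)} ≤ ‖A₀‖_{L^∞(ℝⁿ)} · exp(T·(ε/μ)ⁿ). -/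
open Real MeasureTheory

/-- The Gaussian kernel `Γ_ν(x,y) = (2πν²)^{-n/2} · exp(−‖x−y‖₂²/(2ν²))` on `ℝⁿ`. -/
noncomputable def gaussK (n : ℕ) (ν : ℝ) (x y : EuclideanSpace ℝ (Fin n)) : ℝ :=
  (2 * π * ν ^ 2) ^ (-(n : ℝ) / 2) * Real.exp (-‖x - y‖ ^ 2 / (2 * ν ^ 2))

lemma gauss_integrable_aux (n : ℕ) {b : ℝ} (hb : 0 < b) :
    Integrable (fun y : EuclideanSpace ℝ (Fin n) => Real.exp (-(b * ‖y‖ ^ 2))) := by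
  have h := (GaussianFourier.integrable_cexp_neg_mul_sq_norm_add (V := EuclideanSpace ℝ (Fin n))
    (b := (b : ℂ)) (by simpa using hb) 0 0).norm
  have heq : ∀ y : EuclideanSpace ℝ (Fin n),
      ‖Complex.exp (-(b : ℂ) * (‖y‖ : ℂ) ^ 2 + 0 * (inner ℝ (0 : EuclideanSpace ℝ (Fin n)) y : ℝ))‖
        = Real.exp (-(b * ‖y‖ ^ 2)) := by
    intro y
    rw [Complex.norm_exp]
    have hz : (-(b : ℂ) * (‖y‖ : ℂ) ^ 2 + 0 * ((inner ℝ (0 : EuclideanSpace ℝ (Fin n)) y : ℝ) : ℂ))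
        = ((-(b * ‖y‖ ^ 2) : ℝ) : ℂ) := by push_cast; ring
    rw [hz, Complex.ofReal_re]
  simpa only [heq] using h

lemma gaussK_pos (n : ℕ) {ν : ℝ} (x y : EuclideanSpace ℝ (Fin n)) (hν : 0 < ν) :
    0 < gaussK n ν x y := by
  unfold gaussK
  positivity

lemma gaussK_integrable (n : ℕ) {ν : ℝ} (hν : 0 < ν) (x : EuclideanSpace ℝ (Fin n)) :
    Integrable (fun y => gaussK n ν x y) := by
  have hb : 0 < 1 / (2 * ν ^ 2) := by positivity
  have h := ((gauss_integrable_aux n hb).comp_sub_right x).const_mul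
      ((2 * π * ν ^ 2) ^ (-(n : ℝ) / 2))
  refine h.congr (Filter.Eventually.of_forall fun y => ?_)
  unfold gaussK
  simp only [norm_sub_rev y x]
  congr 1
  rw [Real.exp_eq_exp]
  field_simp

/-- The endogenous productivity operator `P`, evaluated at time `t ∈ [0,T]`, is
essentially bounded with `‖P(v)‖_{L^∞} ≤ ‖A₀‖_{L^∞} · exp(T(ε/μ)ⁿ)`. -/
theorem productivity_operator_Linfty_bound (n : ℕ) (hn : 0 < n)
    (μ ε ξ t T : ℝ) (hμ : 0 < μ) (hμε : μ ≤ ε) (hξ : 0 < ξ)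
    (ht0 : 0 ≤ t) (htT : t ≤ T)
    (φ : ℝ → ℝ) (hφc : Continuous φ) (hφ0 : ∀ x, 0 ≤ φ x)
    (a₀ a₁ : ℝ) (hφlin : ∀ x, φ x ≤ a₀ + a₁ * x)
    (A₀ : EuclideanSpace ℝ (Fin n) → ℝ) (hA : Measurable A₀)
    (hAbdd : MemLp A₀ ⊤ (volume : Measure (EuclideanSpace ℝ (Fin n))))
    (v : EuclideanSpace ℝ (Fin n) → ℝ) (hv : Measurable v) :
    eLpNorm (fun x => A₀ x *
        Real.exp (t * ((∫ y, φ (v y) * gaussK n μ x y) /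
          ((∫ y, φ (v y) * gaussK n ε x y) + ξ)))) ⊤ volume
      ≤ eLpNorm A₀ ⊤ volume * ENNReal.ofReal (Real.exp (T * (ε / μ) ^ n)) := by
  have hε : 0 < ε := lt_of_lt_of_le hμ hμε
  -- Step 1: a₁ = 0, so φ ≤ a₀.
  have ha1 : a₁ = 0 := by
    by_contra h
    have h1 : (0 : ℝ) ≤ a₀ + a₁ * ((-(a₀ + 1)) / a₁) :=
      le_trans (hφ0 _) (hφlin _)
    rw [mul_div_cancel₀ _ h] at h1
    linarith
  have hφa : ∀ x, φ x ≤ a₀ := fun x => by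
    have := hφlin x; rw [ha1] at this; linarith
  -- Step 2: integrability of the integrands.
  have hmeas : Measurable fun y => φ (v y) := hφc.measurable.comp hv
  have hint : ∀ ν : ℝ, 0 < ν → ∀ x, Integrable (fun y => φ (v y) * gaussK n ν x y) := by
    intro ν hν x
    refine Integrable.mono' ((gaussK_integrable n hν x).const_mul a₀)
      ((hmeas.mul ?_).aestronglyMeasurable) (Filter.Eventually.of_forall fun y => ?_)
    · unfold gaussK
      fun_prop
    · have h1 : 0 ≤ gaussK n ν x y := (gaussK_pos n x y hν).le
      rw [Real.norm_eq_abs, abs_of_nonneg (mul_nonneg (hφ0 _) h1)]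
      exact mul_le_mul_of_nonneg_right (hφa _) h1
  -- Step 3: kernel comparison  Γ_μ ≤ (ε/μ)^n Γ_ε.
  set c : ℝ := (ε / μ) ^ n with hc
  have hcpos : 0 < c := pow_pos (div_pos hε hμ) n
  have hker : ∀ x y, gaussK n μ x y ≤ c * gaussK n ε x y := by
    intro x y
    unfold gaussK
    have hconst : (2 * π * μ ^ 2) ^ (-(n : ℝ) / 2)
        = c * (2 * π * ε ^ 2) ^ (-(n : ℝ) / 2) := by
      have h2με : (0 : ℝ) < 2 * π * μ ^ 2 := by positivity
      have h2εε : (0 : ℝ) < 2 * π * ε ^ 2 := by positivity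
      have key : ((2 * π * μ ^ 2) / (2 * π * ε ^ 2)) ^ (-(n : ℝ) / 2) = c := by
        have hq : (2 * π * μ ^ 2) / (2 * π * ε ^ 2) = (μ / ε) ^ 2 := by
          field_simp
        rw [hq, ← Real.rpow_natCast (μ / ε) 2,
          ← Real.rpow_mul (div_nonneg hμ.le hε.le)]
        have : ((2 : ℕ) : ℝ) * (-(n : ℝ) / 2) = -(n : ℝ) := by push_cast; ring
        rw [this, Real.rpow_neg (div_nonneg hμ.le hε.le), Real.rpow_natCast,
          ← inv_pow, inv_div]
      rw [Real.div_rpow h2με.le h2εε.le] at key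
      rw [div_eq_iff (ne_of_gt (Real.rpow_pos_of_pos h2εε _))] at key
      rw [key]
    rw [hconst, mul_assoc]
    refine mul_le_mul_of_nonneg_left ?_ hcpos.le
    refine mul_le_mul_of_nonneg_left (Real.exp_le_exp.2 ?_)
      (Real.rpow_pos_of_pos (by positivity) _).le
    rw [neg_div, neg_div, neg_le_neg_iff]
    exact div_le_div_of_nonneg_left (by positivity) (by positivity)
      (by nlinarith [sq_nonneg μ, sq_nonneg ε])
  -- Step 4: the ratio is bounded by c, pointwise in x.
  have hratio : ∀ x, t * ((∫ y, φ (v y) * gaussK n μ x y) /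
      ((∫ y, φ (v y) * gaussK n ε x y) + ξ)) ≤ T * c := by
    intro x
    have hintμ := hint μ hμ x
    have hintε := hint ε hε x
    have hnum0 : 0 ≤ ∫ y, φ (v y) * gaussK n μ x y :=
      integral_nonneg fun y => mul_nonneg (hφ0 _) (gaussK_pos n x y hμ).le
    have hden0 : 0 ≤ ∫ y, φ (v y) * gaussK n ε x y :=
      integral_nonneg fun y => mul_nonneg (hφ0 _) (gaussK_pos n x y hε).le
    have hdenpos : 0 < (∫ y, φ (v y) * gaussK n ε x y) + ξ := by linarith
    have hmono : (∫ y, φ (v y) * gaussK n μ x y)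
        ≤ ∫ y, c * (φ (v y) * gaussK n ε x y) := by
      refine integral_mono hintμ (hintε.const_mul c) fun y => ?_
      have := mul_le_mul_of_nonneg_left (hker x y) (hφ0 (v y))
      calc φ (v y) * gaussK n μ x y ≤ φ (v y) * (c * gaussK n ε x y) := this
        _ = c * (φ (v y) * gaussK n ε x y) := by ring
    rw [integral_const_mul] at hmono
    have hrle : (∫ y, φ (v y) * gaussK n μ x y) /
        ((∫ y, φ (v y) * gaussK n ε x y) + ξ) ≤ c := by
      rw [div_le_iff₀ hdenpos]
      nlinarith
    have hrnn : 0 ≤ (∫ y, φ (v y) * gaussK n μ x y) /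
        ((∫ y, φ (v y) * gaussK n ε x y) + ξ) := div_nonneg hnum0 hdenpos.le
    exact mul_le_mul htT hrle hrnn (le_trans ht0 htT)
  -- Step 5: conclude.
  rw [eLpNorm_exponent_top, eLpNormEssSup]
  refine essSup_le_of_ae_le _ ?_
  filter_upwards [ae_le_eLpNormEssSup (f := A₀) (μ := volume)] with x hx
  set s := t * ((∫ y, φ (v y) * gaussK n μ x y) /
      ((∫ y, φ (v y) * gaussK n ε x y) + ξ)) with hs
  have h1 : (‖A₀ x * Real.exp s‖₊ : ENNReal) = (‖A₀ x‖₊ : ENNReal) * ‖Real.exp s‖₊ := by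
    rw [nnnorm_mul, ENNReal.coe_mul]
  change (‖A₀ x * Real.exp s‖₊ : ENNReal) ≤ _
  rw [h1]
  have h2 : (‖Real.exp s‖₊ : ENNReal) ≤ ENNReal.ofReal (Real.exp (T * c)) := by
    have he : (‖Real.exp s‖₊ : ENNReal) = ENNReal.ofReal (Real.exp s) := by
      rw [← enorm_eq_nnnorm, ← ofReal_norm, Real.norm_eq_abs, abs_of_pos (Real.exp_pos s)]
    rw [he]
    exact ENNReal.ofReal_le_ofReal (Real.exp_le_exp.2 (hratio x))
  calc (‖A₀ x‖₊ : ENNReal) * ‖Real.exp s‖₊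
      ≤ eLpNormEssSup A₀ volume * ENNReal.ofReal (Real.exp (T * c)) :=
        mul_le_mul' hx h2
    _ = eLpNorm A₀ ⊤ volume * ENNReal.ofReal (Real.exp (T * c)) := by
        rw [eLpNorm_exponent_top]
end

section
/- Let n be a positive natural number, 0 < μ ≤ ε, ξ > 0, and T > 0. Let φ : ℝ → ℝ be nonnegative, Lipschitz continuous with constant L_φ, and satisfy φ(x) ≤ a₀ + a₁x for all x ∈ ℝ; let A₀ ∈ L²(ℝⁿ) ∩ L^∞(ℝⁿ). For v ∈ L²(ℝⁿ) and t ∈ [0,T] define P(v)(x,t) = A₀(x) · exp( t · (∫_{ℝⁿ} φ(v(y)) Γ_μ(x,y) dy) / (∫_{ℝⁿ} φ(v(y)) Γ_ε(x,y) dy + ξ) ). Then there exists a constant κ₃ > 0, depending only on n, μ, ε, ξ, T, L_φ, and ‖A₀‖_{L²(ℝⁿ)}, such that for all v₁, v₂ ∈ L²(ℝⁿ) and all t ∈ [0,T], ‖P(v₁)(·,t) − P(v₂)(·,t)‖_{L²(ℝⁿ)} ≤ t · κ₃ · ‖v₁ − v₂‖_{L²(ℝⁿ)}. -/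
open Real MeasureTheory

lemma integrable_gauss_exp (n : ℕ) {b : ℝ} (hb : 0 < b) :
    Integrable (fun v : EuclideanSpace ℝ (Fin n) => rexp (-b * ‖v‖ ^ 2)) := by
  have h := GaussianFourier.integrable_cexp_neg_mul_sq_norm_add
    (V := EuclideanSpace ℝ (Fin n)) (b := (b : ℂ)) (by simpa using hb) 0 0
  refine h.norm.congr (Filter.Eventually.of_forall fun v => ?_)
  simp [Complex.norm_exp, ← Complex.ofReal_pow]

lemma gaussK_continuous {n : ℕ} {ν : ℝ} (x : EuclideanSpace ℝ (Fin n)) :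
    Continuous (fun y => gaussK n ν x y) := by
  unfold gaussK; fun_prop

lemma gaussK_nonneg {n : ℕ} {ν : ℝ} (x y : EuclideanSpace ℝ (Fin n)) :
    0 ≤ gaussK n ν x y := by
  unfold gaussK
  have := Real.pi_pos
  positivity

lemma integrable_gaussK {n : ℕ} {ν : ℝ} (hν : 0 < ν) (x : EuclideanSpace ℝ (Fin n)) :
    Integrable (fun y => gaussK n ν x y) := by
  have hb : (0:ℝ) < 1 / (2 * ν ^ 2) := by positivity
  have : (fun y : EuclideanSpace ℝ (Fin n) => gaussK n ν x y)
      = fun y => (2 * π * ν ^ 2) ^ (-(n : ℝ) / 2) *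
        rexp (-(1 / (2 * ν ^ 2)) * ‖x - y‖ ^ 2) := by
    funext y; unfold gaussK; congr 1; congr 1; ring
  rw [this]
  exact (((integrable_gauss_exp n hb).comp_sub_left x)).const_mul _

lemma memL2_gaussK {n : ℕ} {ν : ℝ} (hν : 0 < ν) (x : EuclideanSpace ℝ (Fin n)) :
    MemLp (fun y => gaussK n ν x y) 2 (volume : Measure (EuclideanSpace ℝ (Fin n))) := by
  rw [memLp_two_iff_integrable_sq (gaussK_continuous x).aestronglyMeasurable]
  have hb : (0:ℝ) < 1 / ν ^ 2 := by positivity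
  have : (fun y : EuclideanSpace ℝ (Fin n) => gaussK n ν x y ^ 2)
      = fun y => ((2 * π * ν ^ 2) ^ (-(n : ℝ) / 2)) ^ 2 *
        rexp (-(1 / ν ^ 2) * ‖x - y‖ ^ 2) := by
    funext y; unfold gaussK
    rw [mul_pow, sq (rexp _), ← Real.exp_add]
    congr 2
    field_simp
    ring
  rw [this]
  exact (((integrable_gauss_exp n hb).comp_sub_left x)).const_mul _

lemma gaussK_sq_shift {n : ℕ} {ν : ℝ} (x : EuclideanSpace ℝ (Fin n)) :
    ∫ y, gaussK n ν x y ^ (2:ℝ) = ∫ y, gaussK n ν 0 y ^ (2:ℝ) := by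
  have h : ∀ z : EuclideanSpace ℝ (Fin n),
      ∫ y, gaussK n ν z y ^ (2:ℝ)
        = ∫ y : EuclideanSpace ℝ (Fin n), ((2 * π * ν ^ 2) ^ (-(n : ℝ) / 2) *
            rexp (-‖y‖ ^ 2 / (2 * ν ^ 2))) ^ (2:ℝ) := by
    intro z
    simp only [gaussK]
    exact MeasureTheory.integral_sub_left_eq_self
      (fun v : EuclideanSpace ℝ (Fin n) =>
        ((2 * π * ν ^ 2) ^ (-(n : ℝ) / 2) * rexp (-‖v‖ ^ 2 / (2 * ν ^ 2))) ^ (2:ℝ))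
      (volume) z
  rw [h x, h 0]

lemma exp_diff_le {a b M : ℝ} (ha : a ≤ M) (hb : b ≤ M) :
    |rexp a - rexp b| ≤ rexp M * |a - b| := by
  have key : ∀ u v : ℝ, v ≤ u → u ≤ M → rexp u - rexp v ≤ rexp M * (u - v) := by
    intro u v huv huM
    have h1 : rexp u - rexp v = rexp u * (1 - rexp (v - u)) := by
      rw [mul_sub, mul_one, ← Real.exp_add]; ring_nf
    have h2 : 1 - rexp (v - u) ≤ u - v := by
      have := Real.add_one_le_exp (v - u); linarith
    have h3 : rexp u * (1 - rexp (v - u)) ≤ rexp u * (u - v) :=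
      mul_le_mul_of_nonneg_left h2 (Real.exp_nonneg u)
    have h4 : rexp u * (u - v) ≤ rexp M * (u - v) :=
      mul_le_mul_of_nonneg_right (Real.exp_le_exp.2 huM) (by linarith)
    linarith
  rcases le_total b a with h | h
  · rw [abs_of_nonneg (by linarith [Real.exp_le_exp.2 h] : (0:ℝ) ≤ rexp a - rexp b),
      abs_of_nonneg (by linarith : (0:ℝ) ≤ a - b)]
    exact key a b h ha
  · rw [abs_of_nonpos (by linarith [Real.exp_le_exp.2 h] : rexp a - rexp b ≤ 0),
      abs_of_nonpos (by linarith : a - b ≤ 0)]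
    have := key b a h hb
    linarith

lemma gaussK_coeff_eq {μ ε : ℝ} (hμ : 0 < μ) (hε : 0 < ε) (n : ℕ) :
    (2 * π * μ ^ 2) ^ (-(n : ℝ) / 2) = (ε / μ) ^ n * (2 * π * ε ^ 2) ^ (-(n : ℝ) / 2) := by
  have h2π : (0:ℝ) < 2 * π := by positivity
  have h1 : ∀ ν : ℝ, 0 < ν →
      (2 * π * ν ^ 2) ^ (-(n : ℝ) / 2) = (2 * π) ^ (-(n : ℝ) / 2) * ν ^ (-(n : ℝ)) := by
    intro ν hν
    rw [Real.mul_rpow h2π.le (by positivity)]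
    congr 1
    rw [← Real.rpow_natCast ν 2, ← Real.rpow_mul hν.le]
    congr 1
    push_cast
    ring
  rw [h1 μ hμ, h1 ε hε, ← Real.rpow_natCast (ε / μ) n, Real.div_rpow hε.le hμ.le,
    Real.rpow_neg hμ.le, Real.rpow_neg hε.le]
  have hμn : (μ : ℝ) ^ (n : ℝ) ≠ 0 := by positivity
  have hεn : (ε : ℝ) ^ (n : ℝ) ≠ 0 := by positivity
  field_simp

lemma gaussK_le {n : ℕ} {μ ε : ℝ} (hμ : 0 < μ) (hμε : μ ≤ ε) (x y : EuclideanSpace ℝ (Fin n)) :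
    gaussK n μ x y ≤ (ε / μ) ^ n * gaussK n ε x y := by
  have hε : 0 < ε := lt_of_lt_of_le hμ hμε
  unfold gaussK
  rw [gaussK_coeff_eq hμ hε n, mul_assoc]
  refine mul_le_mul_of_nonneg_left ?_ (by positivity)
  refine mul_le_mul_of_nonneg_left ?_ ?_
  · apply Real.exp_le_exp.2
    rw [neg_div, neg_div, neg_le_neg_iff]
    apply div_le_div_of_nonneg_left (by positivity) (by positivity)
    nlinarith
  · have := Real.pi_pos; positivity


set_option maxHeartbeats 1000000 in
/-- Lipschitz continuity of the endogenous productivity operator `P` in `L²`: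
there is a constant `κ₃ > 0` with
`‖P(v₁)(·,t) − P(v₂)(·,t)‖_{L²} ≤ t·κ₃·‖v₁ − v₂‖_{L²}` for all `t ∈ [0,T]`. -/
theorem productivity_operator_lipschitz (n : ℕ) (hn : 0 < n)
    (μ ε ξ T : ℝ) (hμ : 0 < μ) (hμε : μ ≤ ε) (hξ : 0 < ξ) (hT : 0 < T)
    (φ : ℝ → ℝ) (hφ0 : ∀ x, 0 ≤ φ x)
    (Lφ : ℝ) (hLφ : 0 ≤ Lφ) (hφlip : ∀ x y, |φ x - φ y| ≤ Lφ * |x - y|)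
    (a₀ a₁ : ℝ) (hφlin : ∀ x, φ x ≤ a₀ + a₁ * x)
    (A₀ : EuclideanSpace ℝ (Fin n) → ℝ)
    (hA2 : MemLp A₀ 2 (volume : Measure (EuclideanSpace ℝ (Fin n))))
    (hAinf : MemLp A₀ ⊤ (volume : Measure (EuclideanSpace ℝ (Fin n)))) :
    ∃ κ₃ : ℝ, 0 < κ₃ ∧
      ∀ (v₁ v₂ : EuclideanSpace ℝ (Fin n) → ℝ), MemLp v₁ 2 → MemLp v₂ 2 →
        ∀ t : ℝ, 0 ≤ t → t ≤ T →
          eLpNorm (fun x =>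
              A₀ x * Real.exp (t * ((∫ y, φ (v₁ y) * gaussK n μ x y) /
                  ((∫ y, φ (v₁ y) * gaussK n ε x y) + ξ))) -
              A₀ x * Real.exp (t * ((∫ y, φ (v₂ y) * gaussK n μ x y) /
                  ((∫ y, φ (v₂ y) * gaussK n ε x y) + ξ)))) 2 volume
            ≤ ENNReal.ofReal (t * κ₃) * eLpNorm (fun x => v₁ x - v₂ x) 2 volume := by
  have hε : 0 < ε := lt_of_lt_of_le hμ hμε
  have hφc : Continuous φ := by
    have : LipschitzWith (Real.toNNReal Lφ) φ :=
      LipschitzWith.of_dist_le_mul fun a b => by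
        rw [Real.dist_eq, Real.dist_eq, Real.coe_toNNReal Lφ hLφ]; exact hφlip a b
    exact this.continuous
  obtain ⟨R, hRdef⟩ : ∃ r : ℝ, r = (ε / μ) ^ n := ⟨_, rfl⟩
  have hR0 : 0 < R := by rw [hRdef]; positivity
  obtain ⟨Sμ, hSμdef⟩ : ∃ s : ℝ, s = (∫ y, gaussK n μ 0 y ^ (2:ℝ)) ^ (1/2 : ℝ) := ⟨_, rfl⟩
  obtain ⟨Sε, hSεdef⟩ : ∃ s : ℝ, s = (∫ y, gaussK n ε 0 y ^ (2:ℝ)) ^ (1/2 : ℝ) := ⟨_, rfl⟩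
  have hSμ0 : 0 ≤ Sμ := by
    rw [hSμdef]
    exact Real.rpow_nonneg (integral_nonneg fun y => Real.rpow_nonneg (gaussK_nonneg _ _) _) _
  have hSε0 : 0 ≤ Sε := by
    rw [hSεdef]
    exact Real.rpow_nonneg (integral_nonneg fun y => Real.rpow_nonneg (gaussK_nonneg _ _) _) _
  obtain ⟨K, hKdef⟩ : ∃ k : ℝ, k = Lφ * (Sμ + R * Sε) / ξ := ⟨_, rfl⟩
  have hK0 : 0 ≤ K := by
    rw [hKdef]
    have : 0 ≤ Sμ + R * Sε := by nlinarith
    positivity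
  obtain ⟨M, hMdef⟩ : ∃ m : ℝ, m = Real.exp (T * R) := ⟨_, rfl⟩
  have hM0 : 0 < M := hMdef ▸ Real.exp_pos _
  obtain ⟨NA, hNAdef⟩ : ∃ a : ℝ, a = (eLpNorm A₀ 2 volume).toReal := ⟨_, rfl⟩
  have hNA0 : 0 ≤ NA := hNAdef ▸ ENNReal.toReal_nonneg
  refine ⟨M * K * (NA + 1) + 1, by nlinarith [mul_nonneg (mul_nonneg hM0.le hK0) (add_nonneg hNA0 zero_le_one)], ?_⟩
  intro v₁ v₂ hv₁ hv₂ t ht htT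
  obtain ⟨Δ, hΔdef⟩ : ∃ d : EuclideanSpace ℝ (Fin n) → ℝ, d = fun x => v₁ x - v₂ x := ⟨_, rfl⟩
  have hΔ2 : MemLp Δ 2 volume := hΔdef ▸ hv₁.sub hv₂
  have hΔa2 : MemLp (fun x => |Δ x|) 2 volume := by
    simpa [Real.norm_eq_abs] using hΔ2.norm
  obtain ⟨D, hDdef⟩ : ∃ d : ℝ, d = (∫ y, |Δ y| ^ (2:ℝ)) ^ (1/2 : ℝ) := ⟨_, rfl⟩
  have hD0 : 0 ≤ D := by
    rw [hDdef]
    exact Real.rpow_nonneg (integral_nonneg fun y => Real.rpow_nonneg (abs_nonneg _) _) _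
  have hmulint : ∀ (w : EuclideanSpace ℝ (Fin n) → ℝ), MemLp w 2 volume →
      ∀ (ν : ℝ), 0 < ν → ∀ x, Integrable (fun y => |w y| * gaussK n ν x y) volume := by
    intro w hw ν hν x
    have h1 : MemLp ((fun y => |w y|) • (fun y => gaussK n ν x y)) 1 volume :=
      MemLp.smul (memL2_gaussK hν x) (by simpa [Real.norm_eq_abs] using hw.norm)
    exact memLp_one_iff_integrable.mp h1
  have hmem : ∀ (w : EuclideanSpace ℝ (Fin n) → ℝ), MemLp w 2 volume →
      ∀ (ν : ℝ), 0 < ν → ∀ x, Integrable (fun y => φ (w y) * gaussK n ν x y) volume := by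
    intro w hw ν hν x
    have hb : Integrable
        (fun y => φ 0 * gaussK n ν x y + Lφ * (|w y| * gaussK n ν x y)) volume :=
      ((integrable_gaussK hν x).const_mul _).add ((hmulint w hw ν hν x).const_mul _)
    refine hb.mono' ((hφc.comp_aestronglyMeasurable hw.aestronglyMeasurable).mul
      (gaussK_continuous x).aestronglyMeasurable) ?_
    filter_upwards with y
    have h1 : φ (w y) ≤ φ 0 + Lφ * |w y| := by
      have h2 := hφlip (w y) 0
      rw [sub_zero] at h2
      have h3 := le_abs_self (φ (w y) - φ 0)
      linarith
    rw [Real.norm_eq_abs, abs_mul, abs_of_nonneg (gaussK_nonneg x y), abs_of_nonneg (hφ0 _)]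
    calc φ (w y) * gaussK n ν x y ≤ (φ 0 + Lφ * |w y|) * gaussK n ν x y :=
          mul_le_mul_of_nonneg_right h1 (gaussK_nonneg x y)
      _ = φ 0 * gaussK n ν x y + Lφ * (|w y| * gaussK n ν x y) := by ring
  have holder : ∀ (ν : ℝ), 0 < ν → ∀ x,
      ∫ y, |Δ y| * gaussK n ν x y ≤ D * (∫ y, gaussK n ν 0 y ^ (2:ℝ)) ^ (1/2 : ℝ) := by
    intro ν hν x
    have h22 : Real.HolderConjugate 2 2 := Real.HolderConjugate.two_two
    have h2e : ENNReal.ofReal (2:ℝ) = 2 := by norm_num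
    have h := integral_mul_le_Lp_mul_Lq_of_nonneg h22
      (f := fun y => |Δ y|) (g := fun y => gaussK n ν x y) (μ := volume)
      (Filter.Eventually.of_forall fun y => abs_nonneg _)
      (Filter.Eventually.of_forall fun y => gaussK_nonneg _ _)
      (by rw [h2e]; exact hΔa2) (by rw [h2e]; exact memL2_gaussK hν x)
    rw [gaussK_sq_shift x] at h
    rw [hDdef]
    exact h
  have hdiff : ∀ (ν : ℝ), 0 < ν → ∀ x,
      |(∫ y, φ (v₁ y) * gaussK n ν x y) - ∫ y, φ (v₂ y) * gaussK n ν x y|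
        ≤ Lφ * D * (∫ y, gaussK n ν 0 y ^ (2:ℝ)) ^ (1/2 : ℝ) := by
    intro ν hν x
    rw [← integral_sub (hmem v₁ hv₁ ν hν x) (hmem v₂ hv₂ ν hν x)]
    have h1 : |∫ y, (φ (v₁ y) * gaussK n ν x y - φ (v₂ y) * gaussK n ν x y)|
        ≤ ∫ y, ‖φ (v₁ y) * gaussK n ν x y - φ (v₂ y) * gaussK n ν x y‖ := by
      rw [← Real.norm_eq_abs]; exact norm_integral_le_integral_norm _
    have h2 : ∫ y, ‖φ (v₁ y) * gaussK n ν x y - φ (v₂ y) * gaussK n ν x y‖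
        ≤ ∫ y, Lφ * (|Δ y| * gaussK n ν x y) := by
      refine integral_mono_of_nonneg (Filter.Eventually.of_forall fun y => norm_nonneg _)
        ((hmulint Δ hΔ2 ν hν x).const_mul Lφ) (Filter.Eventually.of_forall fun y => ?_)
      show ‖φ (v₁ y) * gaussK n ν x y - φ (v₂ y) * gaussK n ν x y‖
        ≤ Lφ * (|Δ y| * gaussK n ν x y)
      rw [Real.norm_eq_abs, ← sub_mul, abs_mul, abs_of_nonneg (gaussK_nonneg x y)]
      have hh := mul_le_mul_of_nonneg_right (hφlip (v₁ y) (v₂ y))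
        (gaussK_nonneg (n := n) (ν := ν) x y)
      calc |φ (v₁ y) - φ (v₂ y)| * gaussK n ν x y
          ≤ Lφ * |v₁ y - v₂ y| * gaussK n ν x y := hh
        _ = Lφ * (|Δ y| * gaussK n ν x y) := by simp only [hΔdef]; ring
    rw [integral_const_mul] at h2
    have h3 := holder ν hν x
    calc |∫ y, (φ (v₁ y) * gaussK n ν x y - φ (v₂ y) * gaussK n ν x y)|
        ≤ Lφ * ∫ y, |Δ y| * gaussK n ν x y := le_trans h1 h2
      _ ≤ Lφ * (D * (∫ y, gaussK n ν 0 y ^ (2:ℝ)) ^ (1/2 : ℝ)) :=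
          mul_le_mul_of_nonneg_left h3 hLφ
      _ = Lφ * D * (∫ y, gaussK n ν 0 y ^ (2:ℝ)) ^ (1/2 : ℝ) := by ring
  have key : ∀ x,
      ‖A₀ x * Real.exp (t * ((∫ y, φ (v₁ y) * gaussK n μ x y) /
          ((∫ y, φ (v₁ y) * gaussK n ε x y) + ξ))) -
        A₀ x * Real.exp (t * ((∫ y, φ (v₂ y) * gaussK n μ x y) /
          ((∫ y, φ (v₂ y) * gaussK n ε x y) + ξ)))‖
        ≤ ‖(t * (M * (K * D))) * A₀ x‖ := by
    intro x
    obtain ⟨B₁, hB₁⟩ : ∃ b : ℝ, b = ∫ y, φ (v₁ y) * gaussK n μ x y := ⟨_, rfl⟩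
    obtain ⟨B₂, hB₂⟩ : ∃ b : ℝ, b = ∫ y, φ (v₂ y) * gaussK n μ x y := ⟨_, rfl⟩
    obtain ⟨C₁, hC₁⟩ : ∃ c : ℝ, c = ∫ y, φ (v₁ y) * gaussK n ε x y := ⟨_, rfl⟩
    obtain ⟨C₂, hC₂⟩ : ∃ c : ℝ, c = ∫ y, φ (v₂ y) * gaussK n ε x y := ⟨_, rfl⟩
    rw [← hB₁, ← hB₂, ← hC₁, ← hC₂]
    have hB₁0 : 0 ≤ B₁ :=
      hB₁ ▸ integral_nonneg fun y => mul_nonneg (hφ0 _) (gaussK_nonneg _ _)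
    have hB₂0 : 0 ≤ B₂ :=
      hB₂ ▸ integral_nonneg fun y => mul_nonneg (hφ0 _) (gaussK_nonneg _ _)
    have hC₁0 : 0 ≤ C₁ :=
      hC₁ ▸ integral_nonneg fun y => mul_nonneg (hφ0 _) (gaussK_nonneg _ _)
    have hC₂0 : 0 ≤ C₂ :=
      hC₂ ▸ integral_nonneg fun y => mul_nonneg (hφ0 _) (gaussK_nonneg _ _)
    have hC₁ξ : 0 < C₁ + ξ := by linarith
    have hC₂ξ : 0 < C₂ + ξ := by linarith
    have hBRC : ∀ (w : EuclideanSpace ℝ (Fin n) → ℝ), MemLp w 2 volume →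
        (∫ y, φ (w y) * gaussK n μ x y) ≤ R * ((∫ y, φ (w y) * gaussK n ε x y) + ξ) := by
      intro w hw
      have h1 : (∫ y, φ (w y) * gaussK n μ x y)
          ≤ ∫ y, R * (φ (w y) * gaussK n ε x y) := by
        refine integral_mono (hmem w hw μ hμ x) ((hmem w hw ε hε x).const_mul R) fun y => ?_
        rw [hRdef]
        calc φ (w y) * gaussK n μ x y ≤ φ (w y) * ((ε / μ) ^ n * gaussK n ε x y) :=
              mul_le_mul_of_nonneg_left (gaussK_le hμ hμε x y) (hφ0 _)
          _ = (ε / μ) ^ n * (φ (w y) * gaussK n ε x y) := by ring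
      rw [integral_const_mul] at h1
      have h2 : 0 ≤ ∫ y, φ (w y) * gaussK n ε x y :=
        integral_nonneg fun y => mul_nonneg (hφ0 _) (gaussK_nonneg _ _)
      nlinarith
    have hB₁R : B₁ ≤ R * (C₁ + ξ) := by
      rw [hB₁, hC₁]; exact hBRC v₁ hv₁
    have hB₂R : B₂ ≤ R * (C₂ + ξ) := by
      rw [hB₂, hC₂]; exact hBRC v₂ hv₂
    have hr₁0 : 0 ≤ B₁ / (C₁ + ξ) := div_nonneg hB₁0 hC₁ξ.le
    have hr₂0 : 0 ≤ B₂ / (C₂ + ξ) := div_nonneg hB₂0 hC₂ξ.le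
    have hr₁R : B₁ / (C₁ + ξ) ≤ R := (div_le_iff₀ hC₁ξ).2 (by linarith)
    have hr₂R : B₂ / (C₂ + ξ) ≤ R := (div_le_iff₀ hC₂ξ).2 (by linarith)
    have hdiffμ : |B₁ - B₂| ≤ Lφ * D * Sμ := by
      rw [hB₁, hB₂, hSμdef]; exact hdiff μ hμ x
    have hdiffε : |C₁ - C₂| ≤ Lφ * D * Sε := by
      rw [hC₁, hC₂, hSεdef]; exact hdiff ε hε x
    have hrdiff : |B₁ / (C₁ + ξ) - B₂ / (C₂ + ξ)| ≤ K * D := by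
      have hident : B₁ / (C₁ + ξ) - B₂ / (C₂ + ξ)
          = (B₁ - B₂) / (C₁ + ξ) + (B₂ / (C₂ + ξ)) * ((C₂ - C₁) / (C₁ + ξ)) := by
        field_simp
        ring
      have e1 : |(B₁ - B₂) / (C₁ + ξ)| ≤ Lφ * D * Sμ / ξ := by
        rw [abs_div, abs_of_pos hC₁ξ]
        refine div_le_div₀ ?_ hdiffμ hξ (by linarith)
        positivity
      have e2 : |(B₂ / (C₂ + ξ)) * ((C₂ - C₁) / (C₁ + ξ))| ≤ R * (Lφ * D * Sε / ξ) := by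
        rw [abs_mul]
        refine mul_le_mul ?_ ?_ (abs_nonneg _) hR0.le
        · rw [abs_div, abs_of_pos hC₂ξ, abs_of_nonneg hB₂0]
          exact (div_le_iff₀ hC₂ξ).2 (by linarith)
        · rw [abs_div, abs_of_pos hC₁ξ]
          refine div_le_div₀ ?_ ?_ hξ (by linarith)
          · positivity
          · rw [abs_sub_comm]; exact hdiffε
      calc |B₁ / (C₁ + ξ) - B₂ / (C₂ + ξ)|
          ≤ |(B₁ - B₂) / (C₁ + ξ)| + |(B₂ / (C₂ + ξ)) * ((C₂ - C₁) / (C₁ + ξ))| := by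
            rw [hident]; exact abs_add_le _ _
        _ ≤ Lφ * D * Sμ / ξ + R * (Lφ * D * Sε / ξ) := add_le_add e1 e2
        _ = K * D := by rw [hKdef]; field_simp
    have hexp : |Real.exp (t * (B₁ / (C₁ + ξ))) - Real.exp (t * (B₂ / (C₂ + ξ)))|
        ≤ M * (t * (K * D)) := by
      have h1 : t * (B₁ / (C₁ + ξ)) ≤ T * R := mul_le_mul htT hr₁R hr₁0 hT.le
      have h2 : t * (B₂ / (C₂ + ξ)) ≤ T * R := mul_le_mul htT hr₂R hr₂0 hT.le
      have h3 := exp_diff_le h1 h2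
      calc |Real.exp (t * (B₁ / (C₁ + ξ))) - Real.exp (t * (B₂ / (C₂ + ξ)))|
          ≤ Real.exp (T * R) * |t * (B₁ / (C₁ + ξ)) - t * (B₂ / (C₂ + ξ))| := h3
        _ = M * (t * |B₁ / (C₁ + ξ) - B₂ / (C₂ + ξ)|) := by
            rw [← mul_sub, abs_mul, abs_of_nonneg ht, hMdef]
        _ ≤ M * (t * (K * D)) :=
            mul_le_mul_of_nonneg_left (mul_le_mul_of_nonneg_left hrdiff ht) hM0.le
    rw [← mul_sub, Real.norm_eq_abs, Real.norm_eq_abs, abs_mul, abs_mul]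
    have htM : 0 ≤ t * (M * (K * D)) :=
      mul_nonneg ht (mul_nonneg hM0.le (mul_nonneg hK0 hD0))
    calc |A₀ x| * |Real.exp (t * (B₁ / (C₁ + ξ))) - Real.exp (t * (B₂ / (C₂ + ξ)))|
        ≤ |A₀ x| * (M * (t * (K * D))) := mul_le_mul_of_nonneg_left hexp (abs_nonneg _)
      _ = |t * (M * (K * D))| * |A₀ x| := by
          rw [abs_of_nonneg htM]; ring
  have hDeq : eLpNorm Δ 2 volume = ENNReal.ofReal D := by
    rw [hΔ2.eLpNorm_eq_integral_rpow_norm (by norm_num) (by norm_num)]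
    congr 1
    rw [hDdef]
    norm_num [Real.norm_eq_abs, one_div]
  have hA₀le : eLpNorm A₀ 2 volume ≤ ENNReal.ofReal (NA + 1) := by
    rw [← ENNReal.ofReal_toReal hA2.eLpNorm_ne_top, ← hNAdef]
    exact ENNReal.ofReal_le_ofReal (by linarith)
  have htM : 0 ≤ t * (M * (K * D)) :=
    mul_nonneg ht (mul_nonneg hM0.le (mul_nonneg hK0 hD0))
  have htMK : 0 ≤ t * (M * K) := mul_nonneg ht (mul_nonneg hM0.le hK0)
  rw [← hΔdef]
  calc eLpNorm (fun x =>
          A₀ x * Real.exp (t * ((∫ y, φ (v₁ y) * gaussK n μ x y) /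
              ((∫ y, φ (v₁ y) * gaussK n ε x y) + ξ))) -
          A₀ x * Real.exp (t * ((∫ y, φ (v₂ y) * gaussK n μ x y) /
              ((∫ y, φ (v₂ y) * gaussK n ε x y) + ξ)))) 2 volume
      ≤ eLpNorm (fun x => (t * (M * (K * D))) * A₀ x) 2 volume := eLpNorm_mono key
    _ = ‖(t * (M * (K * D)))‖₊ * eLpNorm A₀ 2 volume := by
        rw [show (fun x => (t * (M * (K * D))) * A₀ x) = (t * (M * (K * D))) • A₀ from rfl,
          eLpNorm_const_smul, enorm_eq_nnnorm]
    _ = ENNReal.ofReal (t * (M * K)) * ENNReal.ofReal D * eLpNorm A₀ 2 volume := by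
        congr 1
        rw [← ENNReal.ofReal_mul htMK, ← enorm_eq_nnnorm, ← ofReal_norm,
          Real.norm_eq_abs, abs_of_nonneg htM]
        congr 1
        ring
    _ = ENNReal.ofReal (t * (M * K)) * eLpNorm Δ 2 volume * eLpNorm A₀ 2 volume := by
        rw [hDeq]
    _ ≤ ENNReal.ofReal (t * (M * K)) * eLpNorm Δ 2 volume * ENNReal.ofReal (NA + 1) :=
        mul_le_mul_right hA₀le _
    _ = (ENNReal.ofReal (t * (M * K)) * ENNReal.ofReal (NA + 1)) * eLpNorm Δ 2 volume := by
        ring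
    _ = ENNReal.ofReal (t * (M * K) * (NA + 1)) * eLpNorm Δ 2 volume := by
        rw [← ENNReal.ofReal_mul htMK]
    _ ≤ ENNReal.ofReal (t * (M * K * (NA + 1) + 1)) * eLpNorm Δ 2 volume := by
        refine mul_le_mul_left (ENNReal.ofReal_le_ofReal ?_) _
        nlinarith
end
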